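/- For every integer n ≥ 2, 2ζ(2n+1) − η(2n+2) − ζ(2n−1) < 1 − (ζ(2n) + ζ(2n+1))/2 < 0. -/

import Mathlib

noncomputable def zetaR (n : ℕ) : ℝ := ∑' k : ℕ, (1 : ℝ) / (k + 1) ^ n

noncomputable def etaR (n : ℕ) : ℝ := ∑' k : ℕ, (-1 : ℝ) ^ k / (k + 1) ^ n

lemma sumZ (p : ℕ) (hp : 2 ≤ p) : Summable (fun k : ℕ => (1:ℝ) / (k + 1) ^ p) := by
  have h := Real.summable_one_div_nat_pow.2 (by omega : 1 < p)
  have := (summable_nat_add_iff 1).2 h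
  convert this using 2 with k
  case e'_3 => rfl
  push_cast
  ring

lemma sumE (p : ℕ) (hp : 2 ≤ p) : Summable (fun k : ℕ => (-1:ℝ) ^ k / (k + 1) ^ p) := by
  apply Summable.of_abs
  convert sumZ p hp using 2 with k
  case e'_3 => rfl
  rw [abs_div, abs_pow, abs_neg, abs_one, one_pow, abs_of_nonneg (by positivity)]

lemma key (m : ℕ) (hm : 3 ≤ m) :
    2 * zetaR (m+2) - etaR (m+3) - zetaR m < 1 - (zetaR (m+1) + zetaR (m+2)) / 2 := by
  set g : ℕ → ℝ := fun k =>
    2 * ((1:ℝ) / (k + 1) ^ (m+2)) - (-1:ℝ) ^ k / (k + 1) ^ (m+3) - (1:ℝ) / (k + 1) ^ m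
      + ((1:ℝ) / (k + 1) ^ (m+1) + (1:ℝ) / (k + 1) ^ (m+2)) / 2
      - (if k = 0 then (1:ℝ) else 0) with hgdef
  have hZ0 : HasSum (fun k : ℕ => (1:ℝ) / (k + 1) ^ m) (zetaR m) := (sumZ m (by omega)).hasSum
  have hZ1 : HasSum (fun k : ℕ => (1:ℝ) / (k + 1) ^ (m+1)) (zetaR (m+1)) := (sumZ _ (by omega)).hasSum
  have hZ2 : HasSum (fun k : ℕ => (1:ℝ) / (k + 1) ^ (m+2)) (zetaR (m+2)) := (sumZ _ (by omega)).hasSum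
  have hE : HasSum (fun k : ℕ => (-1:ℝ) ^ k / (k + 1) ^ (m+3)) (etaR (m+3)) := (sumE _ (by omega)).hasSum
  have hI : HasSum (fun k : ℕ => if k = 0 then (1:ℝ) else 0) 1 := hasSum_ite_eq 0 1
  have hg : HasSum g (2 * zetaR (m+2) - etaR (m+3) - zetaR m + (zetaR (m+1) + zetaR (m+2)) / 2 - 1) :=
    ((((hZ2.mul_left 2).sub hE).sub hZ0).add ((hZ1.add hZ2).div_const 2)).sub hI
  have hterm : ∀ k : ℕ, g k ≤ 0 := by
    intro k
    by_cases hk : k = 0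
    · subst hk; simp [hgdef]; norm_num
    · have hk1 : 1 ≤ k := Nat.one_le_iff_ne_zero.2 hk
      have ht : (2:ℝ) ≤ (k:ℝ) + 1 := by
        have : (1:ℝ) ≤ (k:ℝ) := by exact_mod_cast hk1
        linarith
      set t : ℝ := (k:ℝ) + 1 with htd
      have ht0 : (0:ℝ) < t := by linarith
      have hv0 : (0:ℝ) < 1/t := by positivity
      have hv2 : 1/t ≤ 1/2 := by
        apply one_div_le_one_div_of_le <;> linarith
      have hpow : ∀ j : ℕ, (1:ℝ)/t^(m+j) = (1/t)^m * (1/t)^j := by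
        intro j; rw [← pow_add, one_div_pow]
      have hpow0 : (1:ℝ)/t^m = (1/t)^m := (one_div_pow t m).symm
      have hX : (0:ℝ) ≤ (1/t)^m := by positivity
      have hA : (0:ℝ) ≤ (1/t)^m * (1/t)^3 := by positivity
      have hsig : -((1/t)^m * (1/t)^3) ≤ (-1:ℝ)^k * ((1/t)^m * (1/t)^3) := by
        rcases neg_one_pow_eq_or ℝ k with h | h <;> rw [h] <;> nlinarith
      have hp : (0:ℝ) ≤ (1/t)^m * (1 - 2*(1/t)) * ((1 + 1/t) * (2 + 1/t)) := by
        apply mul_nonneg (mul_nonneg hX (by linarith))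
        apply mul_nonneg <;> linarith
      simp only [hgdef, if_neg hk]
      rw [← htd]
      rw [div_eq_mul_one_div ((-1:ℝ)^k) (t^(m+3))]
      rw [hpow 2, hpow 3, hpow 1, hpow0]
      nlinarith [hsig, hp]
  have h2 : g 2 < 0 := by
    have h3 : ((2:ℕ):ℝ) + 1 = 3 := by norm_num
    simp only [hgdef, h3]
    norm_num
    have hX : (0:ℝ) < (3:ℝ)^m := by positivity
    rw [pow_add, pow_add, pow_add]
    have hy : (0:ℝ) < ((3:ℝ)^m)⁻¹ := inv_pos.2 hX
    have heq : 2 * ((3:ℝ)^m * 3^2)⁻¹ - ((3:ℝ)^m * 3^3)⁻¹ - ((3:ℝ)^m)⁻¹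
        + (((3:ℝ)^m * 3^1)⁻¹ + ((3:ℝ)^m * 3^2)⁻¹)/2 = -16/27 * ((3:ℝ)^m)⁻¹ := by
      field_simp
      ring
    rw [heq]
    nlinarith
  have hlt : (∑' k, g k) < 0 := by
    have := Summable.tsum_lt_tsum (f := g) (g := fun _ => (0:ℝ)) (i := 2) hterm h2 hg.summable summable_zero
    simpa using this
  rw [hg.tsum_eq] at hlt
  linarith

lemma zeta_gt_one (p : ℕ) (hp : 2 ≤ p) : 1 < zetaR p := by
  have hs := sumZ p hp
  have hle : ∑ k ∈ Finset.range 2, (1:ℝ) / (k + 1) ^ p ≤ zetaR p :=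
    Summable.sum_le_tsum _ (fun k _ => by positivity) hs
  have : (1:ℝ) + 1/2^p ≤ zetaR p := by
    have := hle; simp [Finset.sum_range_succ] at this; norm_num at this ⊢; linarith
  have h2 : (0:ℝ) < 1/2^p := by positivity
  linarith

theorem a_sum_neg (n : ℕ) (hn : 2 ≤ n) :
    2 * zetaR (2 * n + 1) - etaR (2 * n + 2) - zetaR (2 * n - 1) <
      1 - (zetaR (2 * n) + zetaR (2 * n + 1)) / 2 ∧
    1 - (zetaR (2 * n) + zetaR (2 * n + 1)) / 2 < 0 := by
  constructor
  · have e1 : 2 * n + 1 = (2 * n - 1) + 2 := by omega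
    have e2 : 2 * n + 2 = (2 * n - 1) + 3 := by omega
    have e3 : 2 * n = (2 * n - 1) + 1 := by omega
    rw [e1, e2, e3]
    exact key (2 * n - 1) (by omega)
  · have h1 := zeta_gt_one (2 * n) (by omega)
    have h2 := zeta_gt_one (2 * n + 1) (by omega)
    linarith
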